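/- arXiv:2108.03455 — 2 statements merged into one kernel-verified Lean document; each statement's English description precedes it below -/
import Mathlib

section
/- Assume (V, E) contains no directed cycle of negative weight and n ≥ 2. Then for every vertex v reachable from s, D_{2n−3}(v) equals the minimum weight of a directed path from s to v, and D_{2n−3}(v) = +∞ for every vertex v not reachable from s. (This is the case t = n−2, matching the Bellman–Ford algorithm.) -/
/-- `L` is a directed walk from `u` to `v`: a nonempty list of vertices starting at `u`,
ending at `v`, with consecutive vertices joined by edges. Its number of edges is `L.length - 1`. -/
def IsWalk {V : Type} (E : V → V → Prop) (u v : V) (L : List V) : Prop :=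
  L ≠ [] ∧ L.head? = some u ∧ L.getLast? = some v ∧ L.Chain' E

/-- A directed path: a walk with pairwise distinct vertices. -/
def IsPath {V : Type} (E : V → V → Prop) (u v : V) (L : List V) : Prop :=
  IsWalk E u v L ∧ L.Nodup

/-- The weight of a walk: the sum of the weights of its consecutive edges
(the trivial walk has weight 0). -/
def walkWeight {V : Type} (w : V → V → ℝ) (L : List V) : ℝ :=
  ((L.zip L.tail).map fun e => w e.1 e.2).sum

/-- `v` is reachable from `u`. -/
def Reaches {V : Type} (E : V → V → Prop) (u v : V) : Prop :=
  ∃ L, IsWalk E u v L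

/-- BFS level: the minimum number of edges of a directed walk from `s` to `v`. -/
noncomputable def level {V : Type} (E : V → V → Prop) (s v : V) : ℕ :=
  sInf {k | ∃ L, IsWalk E s v L ∧ L.length = k + 1}

/-- The forward pass: `D'(v_j) = min (D(v_j), min over edges (v_i,v_j) with i < j of
`D'(v_i) + w(v_i,v_j))`, computed for `j` in increasing order (over the empty set the
inner minimum is `+∞`, so in particular `D'(v_1) = D(v_1)`). -/
noncomputable def forwardPass (n : ℕ) (E : Fin n → Fin n → Prop) [DecidableRel E]
    (w : Fin n → Fin n → ℝ) (D : Fin n → WithTop ℝ) : Fin n → WithTop ℝ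
  | j =>
    min (D j)
      (((Finset.univ.filter (fun i : Fin n => i < j ∧ E i j)).attach).inf
        (fun i => forwardPass n E w D i.1 + (w i.1 j : WithTop ℝ)))
  termination_by j => j.val
  decreasing_by
    exact (Finset.mem_filter.mp i.2).2.1

/-- The backward pass: `D'(v_j) = min (D(v_j), min over edges (v_i,v_j) with i > j of
`D'(v_i) + w(v_i,v_j))`, computed for `j` in decreasing order (in particular
`D'(v_n) = D(v_n)`). -/
noncomputable def backwardPass (n : ℕ) (E : Fin n → Fin n → Prop) [DecidableRel E]
    (w : Fin n → Fin n → ℝ) (D : Fin n → WithTop ℝ) : Fin n → WithTop ℝ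
  | j =>
    min (D j)
      (((Finset.univ.filter (fun i : Fin n => j < i ∧ E i j)).attach).inf
        (fun i => backwardPass n E w D i.1 + (w i.1 j : WithTop ℝ)))
  termination_by j => n - j.val
  decreasing_by
    have h1 : j.val < i.1.val := (Finset.mem_filter.mp i.2).2.1
    have h2 : i.1.val < n := i.1.isLt
    omega

/-- `Dseq n E w s k` is `D_k` : `D_0(s) = 0`, `D_0 = +∞` elsewhere; `D_1` is the forward
pass of `D_0`; `D_{2k}` is the backward pass of `D_{2k-1}`; `D_{2k+1}` is the forward pass
of `D_{2k}` (for `k ≥ 1`). -/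
noncomputable def Dseq (n : ℕ) (E : Fin n → Fin n → Prop) [DecidableRel E]
    (w : Fin n → Fin n → ℝ) (s : Fin n) : ℕ → Fin n → WithTop ℝ
  | 0 => fun j => if j = s then 0 else ⊤
  | (k + 1) =>
    if k % 2 = 0 then forwardPass n E w (Dseq n E w s k)
    else backwardPass n E w (Dseq n E w s k)

-- cons lemma
theorem walkWeight_cons {V : Type} (w : V → V → ℝ) (a b : V) (M : List V) :
    walkWeight w (a :: b :: M) = w a b + walkWeight w (b :: M) := by
  simp [walkWeight]

theorem walkWeight_singleton {V : Type} (w : V → V → ℝ) (a : V) :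
    walkWeight w [a] = 0 := by simp [walkWeight]

theorem walkWeight_split {V : Type} (w : V → V → ℝ) (A : List V) (x : V) (B : List V) :
    walkWeight w (A ++ x :: B) = walkWeight w (A ++ [x]) + walkWeight w (x :: B) := by
  induction A with
  | nil => simp [walkWeight_singleton]
  | cons a A ih =>
    cases A with
    | nil => simp [walkWeight_cons, walkWeight_singleton]
    | cons b A' =>
      simp only [List.cons_append, walkWeight_cons] at *
      rw [ih]; ring

theorem eq_dropLast_append {V : Type} {L : List V} {v : V} (h : L.getLast? = some v) :
    L = L.dropLast ++ [v] := by
  have hne : L ≠ [] := by rintro rfl; simp at h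
  conv_lhs => rw [← List.dropLast_append_getLast hne]
  rw [List.getLast?_eq_getLast hne] at h
  simp at h; rw [h]

theorem walkWeight_concat {V : Type} (w : V → V → ℝ) {L : List V} {u : V} (v : V)
    (h : L.getLast? = some u) :
    walkWeight w (L ++ [v]) = walkWeight w L + w u v := by
  have h1 := eq_dropLast_append h
  conv_lhs => rw [h1]
  rw [List.append_assoc, List.singleton_append]
  rw [walkWeight_split w L.dropLast u [v], ← h1, walkWeight_cons, walkWeight_singleton]
  ring

theorem IsWalk.concat {V : Type} {E : V → V → Prop} {s u v : V} {L : List V}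
    (h : IsWalk E s u L) (he : E u v) : IsWalk E s v (L ++ [v]) := by
  obtain ⟨hne, hh, hl, hc⟩ := h
  refine ⟨by simp, ?_, by simp, ?_⟩
  · rw [List.head?_append_of_ne_nil _ hne] at *; exact hh
  · rw [List.Chain', List.isChain_append]
    refine ⟨hc, List.isChain_singleton _, ?_⟩
    intro x hx y hy
    simp only [List.head?_cons, Option.mem_def, Option.some.injEq] at hy
    rw [Option.mem_def, hl] at hx
    cases hx; cases hy; exact he

theorem IsWalk.peel {V : Type} {E : V → V → Prop} {s v : V} {L : List V}
    (h : IsWalk E s v L) (hlen : 2 ≤ L.length) :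
    ∃ M u, L = M ++ [v] ∧ IsWalk E s u M ∧ E u v ∧ M.getLast? = some u := by
  obtain ⟨hne, hh, hl, hc⟩ := h
  have h1 := eq_dropLast_append hl
  have hMne : L.dropLast ≠ [] := by
    rw [← List.length_pos_iff_ne_nil, List.length_dropLast]; omega
  set M := L.dropLast with hM
  obtain ⟨u, hu⟩ := Option.isSome_iff_exists.mp (List.getLast?_isSome.mpr hMne)
  rw [h1] at hc
  rw [List.Chain', List.isChain_append] at hc
  obtain ⟨hcM, -, hedge⟩ := hc
  refine ⟨M, u, h1, ⟨hMne, ?_, hu, hcM⟩, hedge u hu v rfl, hu⟩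
  rw [h1, List.head?_append_of_ne_nil _ hMne] at hh; exact hh


variable {n : ℕ} (E : Fin n → Fin n → Prop) [DecidableRel E] (w : Fin n → Fin n → ℝ)

theorem forwardPass_le (D : Fin n → WithTop ℝ) (j : Fin n) :
    forwardPass n E w D j ≤ D j := by
  rw [forwardPass]; exact min_le_left _ _

theorem forwardPass_relax (D : Fin n → WithTop ℝ) {i j : Fin n} (hij : i < j) (he : E i j) :
    forwardPass n E w D j ≤ forwardPass n E w D i + (w i j : WithTop ℝ) := by
  conv_lhs => rw [forwardPass]
  refine le_trans (min_le_right _ _) ?_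
  have hmem : i ∈ Finset.univ.filter (fun i : Fin n => i < j ∧ E i j) := by
    simp [hij, he]
  exact Finset.inf_le (Finset.mem_attach _ ⟨i, hmem⟩)

theorem backwardPass_le (D : Fin n → WithTop ℝ) (j : Fin n) :
    backwardPass n E w D j ≤ D j := by
  rw [backwardPass]; exact min_le_left _ _

theorem backwardPass_relax (D : Fin n → WithTop ℝ) {i j : Fin n} (hij : j < i) (he : E i j) :
    backwardPass n E w D j ≤ backwardPass n E w D i + (w i j : WithTop ℝ) := by
  conv_lhs => rw [backwardPass]
  refine le_trans (min_le_right _ _) ?_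
  have hmem : i ∈ Finset.univ.filter (fun i : Fin n => j < i ∧ E i j) := by
    simp [hij, he]
  exact Finset.inf_le (Finset.mem_attach _ ⟨i, hmem⟩)

theorem Dseq_succ_le (s : Fin n) (k : ℕ) (j : Fin n) :
    Dseq n E w s (k + 1) j ≤ Dseq n E w s k j := by
  rw [Dseq]
  by_cases h : k % 2 = 0
  · simp only [h, if_pos rfl]; exact forwardPass_le E w _ j
  · simp only [if_neg h]; exact backwardPass_le E w _ j

theorem Dseq_anti (s : Fin n) {k k' : ℕ} (h : k ≤ k') (j : Fin n) :
    Dseq n E w s k' j ≤ Dseq n E w s k j := by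
  induction k' with
  | zero => have : k = 0 := by omega
            subst this; exact le_refl _
  | succ m ih =>
    rcases Nat.lt_or_ge k (m+1) with h' | h'
    · exact le_trans (Dseq_succ_le E w s m j) (ih (by omega))
    · have : k = m + 1 := by omega
      subst this; exact le_refl _

theorem Dseq_relax_odd (s : Fin n) {k : ℕ} (hk : k % 2 = 1) {i j : Fin n}
    (hij : i < j) (he : E i j) :
    Dseq n E w s k j ≤ Dseq n E w s k i + (w i j : WithTop ℝ) := by
  obtain ⟨m, rfl⟩ : ∃ m, k = m + 1 := ⟨k - 1, by omega⟩
  have hm : m % 2 = 0 := by omega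
  rw [Dseq]
  simp only [hm, if_pos rfl]
  exact forwardPass_relax E w _ hij he

theorem Dseq_relax_even (s : Fin n) {k : ℕ} (hk : k % 2 = 0) (hk0 : k ≠ 0) {i j : Fin n}
    (hij : j < i) (he : E i j) :
    Dseq n E w s k j ≤ Dseq n E w s k i + (w i j : WithTop ℝ) := by
  obtain ⟨m, rfl⟩ : ∃ m, k = m + 1 := ⟨k - 1, by omega⟩
  have hm : ¬ (m % 2 = 0) := by omega
  rw [Dseq]
  simp only [if_neg hm]
  exact backwardPass_relax E w _ hij he

theorem Dseq_zero_self (s : Fin n) : Dseq n E w s 0 s = 0 := by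
  rw [Dseq]; simp

theorem upper_bound (s : Fin n) (hs : s.val = 0)
    (hw : ∀ u : Fin n, E u u → 0 ≤ w u u) :
    ∀ (m : ℕ) (L : List (Fin n)) (v : Fin n), L.length ≤ m → IsWalk E s v L →
      ∃ r, r < L.length ∧ Dseq n E w s r v ≤ (walkWeight w L : WithTop ℝ) := by
  intro m
  induction m with
  | zero =>
    intro L v hm hw'
    have := List.length_pos_iff_ne_nil.mpr hw'.1
    omega
  | succ m ih =>
    intro L v hm hwalk
    rcases Nat.lt_or_ge L.length 2 with h2 | h2
    · -- trivial walk
      have hne := hwalk.1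
      have hlen : L.length = 1 := by
        have := List.length_pos_iff_ne_nil.mpr hne; omega
      obtain ⟨x, rfl⟩ := List.length_eq_one_iff.mp hlen
      obtain ⟨-, hh, hl, -⟩ := hwalk
      simp only [List.head?_cons, Option.some.injEq] at hh
      simp only [List.getLast?_singleton, Option.some.injEq] at hl
      subst hh; subst hl
      refine ⟨0, by simp, ?_⟩
      rw [Dseq_zero_self, walkWeight_singleton]
      simp
    · obtain ⟨M, u, rfl, hM, he, hlast⟩ := hwalk.peel h2
      have hMlen : M.length + 1 = (M ++ [v]).length := by simp
      obtain ⟨r', hr', hD⟩ := ih M u (by omega) hM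
      have hWL : walkWeight w (M ++ [v]) = walkWeight w M + w u v :=
        walkWeight_concat w v hlast
      rcases lt_trichotomy u v with huv | huv | huv
      · -- forward edge
        set r := if r' % 2 = 1 then r' else r' + 1 with hr
        have hrodd : r % 2 = 1 := by by_cases h : r' % 2 = 1 <;> simp [hr, h] <;> omega
        have hrle : r' ≤ r ∧ r ≤ r' + 1 := by by_cases h : r' % 2 = 1 <;> simp [hr, h] <;> omega
        refine ⟨r, by omega, ?_⟩
        calc Dseq n E w s r v ≤ Dseq n E w s r u + (w u v : WithTop ℝ) :=
              Dseq_relax_odd E w s hrodd huv he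
          _ ≤ Dseq n E w s r' u + (w u v : WithTop ℝ) := by
              exact add_le_add_left (Dseq_anti E w s hrle.1 u) _
          _ ≤ (walkWeight w M : WithTop ℝ) + (w u v : WithTop ℝ) := add_le_add_left hD _
          _ = ((walkWeight w (M ++ [v]) : ℝ) : WithTop ℝ) := by
              rw [hWL]; exact (WithTop.coe_add _ _).symm
      · -- self loop
        subst huv
        refine ⟨r', by omega, ?_⟩
        rw [hWL]
        calc Dseq n E w s r' u ≤ (walkWeight w M : WithTop ℝ) := hD
          _ ≤ ((walkWeight w M + w u u : ℝ) : WithTop ℝ) := by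
              rw [WithTop.coe_le_coe]; have := hw u he; linarith
      · -- backward edge
        have hu : u ≠ s := by
          intro h; subst h
          exact absurd hs (by omega)
        have hr0 : r' ≠ 0 := by
          intro h; subst h
          have : Dseq n E w s 0 u = ⊤ := by rw [Dseq]; simp [hu]
          rw [this] at hD
          exact WithTop.coe_ne_top (top_le_iff.mp hD)
        set r := if r' % 2 = 0 then r' else r' + 1 with hr
        have hreven : r % 2 = 0 := by by_cases h : r' % 2 = 0 <;> simp [hr, h] <;> omega
        have hrle : r' ≤ r ∧ r ≤ r' + 1 := by by_cases h : r' % 2 = 0 <;> simp [hr, h] <;> omega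
        have hrne : r ≠ 0 := by omega
        refine ⟨r, by omega, ?_⟩
        calc Dseq n E w s r v ≤ Dseq n E w s r u + (w u v : WithTop ℝ) :=
              Dseq_relax_even E w s hreven hrne huv he
          _ ≤ Dseq n E w s r' u + (w u v : WithTop ℝ) :=
              add_le_add_left (Dseq_anti E w s hrle.1 u) _
          _ ≤ (walkWeight w M : WithTop ℝ) + (w u v : WithTop ℝ) := add_le_add_left hD _
          _ = ((walkWeight w (M ++ [v]) : ℝ) : WithTop ℝ) := by
              rw [hWL]; exact (WithTop.coe_add _ _).symm

theorem forwardPass_sound (s : Fin n) (D : Fin n → WithTop ℝ)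
    (hD : ∀ j : Fin n, D j ≠ ⊤ → ∃ L, IsWalk E s j L ∧ D j = (walkWeight w L : WithTop ℝ)) :
    ∀ j : Fin n, forwardPass n E w D j ≠ ⊤ →
      ∃ L, IsWalk E s j L ∧ forwardPass n E w D j = (walkWeight w L : WithTop ℝ) := by
  suffices H : ∀ (m : ℕ) (j : Fin n), j.val < m → forwardPass n E w D j ≠ ⊤ →
      ∃ L, IsWalk E s j L ∧ forwardPass n E w D j = (walkWeight w L : WithTop ℝ) by
    exact fun j => H (j.val + 1) j (by omega)
  intro m
  induction m with
  | zero => omega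
  | succ m ih =>
    intro j hj hne
    rw [forwardPass] at hne ⊢
    rcases le_total (D j)
        (((Finset.univ.filter (fun i : Fin n => i < j ∧ E i j)).attach).inf
          (fun i => forwardPass n E w D i.1 + (w i.1 j : WithTop ℝ))) with hle | hle
    · rw [min_eq_left hle] at hne ⊢
      exact hD j hne
    · rw [min_eq_right hle] at hne ⊢
      have hnonempty : ((Finset.univ.filter (fun i : Fin n => i < j ∧ E i j)).attach).Nonempty := by
        rcases Finset.eq_empty_or_nonempty ((Finset.univ.filter (fun i : Fin n => i < j ∧ E i j)).attach) with h | h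
        · rw [h] at hne; simp at hne
        · exact h
      obtain ⟨i, -, hieq⟩ := Finset.exists_mem_eq_inf _ hnonempty
        (fun i => forwardPass n E w D i.1 + (w i.1 j : WithTop ℝ))
      rw [hieq] at hne ⊢
      have hilt : i.1 < j ∧ E i.1 j := (Finset.mem_filter.mp i.2).2
      have hfp : forwardPass n E w D i.1 ≠ ⊤ := by
        intro h; rw [h] at hne; simp at hne
      obtain ⟨L, hLwalk, hLeq⟩ := ih i.1 (by have := hilt.1; omega) hfp
      refine ⟨L ++ [j], hLwalk.concat hilt.2, ?_⟩
      rw [walkWeight_concat w j hLwalk.2.2.1, hLeq, WithTop.coe_add]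

theorem backwardPass_sound (s : Fin n) (D : Fin n → WithTop ℝ)
    (hD : ∀ j : Fin n, D j ≠ ⊤ → ∃ L, IsWalk E s j L ∧ D j = (walkWeight w L : WithTop ℝ)) :
    ∀ j : Fin n, backwardPass n E w D j ≠ ⊤ →
      ∃ L, IsWalk E s j L ∧ backwardPass n E w D j = (walkWeight w L : WithTop ℝ) := by
  suffices H : ∀ (m : ℕ) (j : Fin n), n - j.val ≤ m → backwardPass n E w D j ≠ ⊤ →
      ∃ L, IsWalk E s j L ∧ backwardPass n E w D j = (walkWeight w L : WithTop ℝ) by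
    exact fun j => H n j (by omega)
  intro m
  induction m with
  | zero => intro j hj; have := j.isLt; omega
  | succ m ih =>
    intro j hj hne
    rw [backwardPass] at hne ⊢
    rcases le_total (D j)
        (((Finset.univ.filter (fun i : Fin n => j < i ∧ E i j)).attach).inf
          (fun i => backwardPass n E w D i.1 + (w i.1 j : WithTop ℝ))) with hle | hle
    · rw [min_eq_left hle] at hne ⊢
      exact hD j hne
    · rw [min_eq_right hle] at hne ⊢
      have hnonempty : ((Finset.univ.filter (fun i : Fin n => j < i ∧ E i j)).attach).Nonempty := by
        rcases Finset.eq_empty_or_nonempty ((Finset.univ.filter (fun i : Fin n => j < i ∧ E i j)).attach) with h | h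
        · rw [h] at hne; simp at hne
        · exact h
      obtain ⟨i, -, hieq⟩ := Finset.exists_mem_eq_inf _ hnonempty
        (fun i => backwardPass n E w D i.1 + (w i.1 j : WithTop ℝ))
      rw [hieq] at hne ⊢
      have hilt : j < i.1 ∧ E i.1 j := (Finset.mem_filter.mp i.2).2
      have hfp : backwardPass n E w D i.1 ≠ ⊤ := by
        intro h; rw [h] at hne; simp at hne
      obtain ⟨L, hLwalk, hLeq⟩ := ih i.1 (by have := i.1.isLt; have := hilt.1; omega) hfp
      refine ⟨L ++ [j], hLwalk.concat hilt.2, ?_⟩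
      rw [walkWeight_concat w j hLwalk.2.2.1, hLeq, WithTop.coe_add]

theorem Dseq_sound (s : Fin n) (k : ℕ) :
    ∀ j : Fin n, Dseq n E w s k j ≠ ⊤ →
      ∃ L, IsWalk E s j L ∧ Dseq n E w s k j = (walkWeight w L : WithTop ℝ) := by
  induction k with
  | zero =>
    intro j hj
    rw [Dseq] at hj ⊢
    by_cases h : j = s
    · subst h
      refine ⟨[j], ⟨by simp, by simp, by simp, by simp [List.Chain']⟩, ?_⟩
      simp [walkWeight_singleton]
    · simp [h] at hj
  | succ k ih =>
    intro j hj
    rw [Dseq] at hj ⊢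
    by_cases h : k % 2 = 0
    · simp only [if_pos h] at hj ⊢
      exact forwardPass_sound E w s _ ih j hj
    · simp only [if_neg h] at hj ⊢
      exact backwardPass_sound E w s _ ih j hj

theorem sublist_pair_decomp {α : Type*} {x : α} :
    ∀ {l : List α}, List.Sublist [x, x] l → ∃ A B C, l = A ++ x :: (B ++ x :: C) := by
  intro l
  induction l with
  | nil => intro h; exact absurd (List.eq_nil_of_sublist_nil h) (by simp)
  | cons a l ih =>
    intro h
    cases h with
    | cons _ h' =>
      obtain ⟨A, B, C, rfl⟩ := ih h'
      exact ⟨a :: A, B, C, rfl⟩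
    | @cons_cons l1 l2 b h' =>
      have hx : x ∈ l := List.Sublist.subset h' (by simp)
      obtain ⟨B, C, rfl⟩ := List.append_of_mem hx
      exact ⟨[], B, C, rfl⟩

theorem walk_to_path (s : Fin n)
    (hnn : ∀ (u : Fin n) (L : List (Fin n)), IsWalk E u u L → 2 ≤ L.length →
      0 ≤ walkWeight w L) :
    ∀ (m : ℕ) (L : List (Fin n)) (v : Fin n), L.length ≤ m → IsWalk E s v L →
      ∃ M, IsPath E s v M ∧ walkWeight w M ≤ walkWeight w L := by
  intro m
  induction m with
  | zero =>
    intro L v hm hwalk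
    have := List.length_pos_iff_ne_nil.mpr hwalk.1; omega
  | succ m ih =>
    intro L v hm hwalk
    by_cases hnd : L.Nodup
    · exact ⟨L, ⟨hwalk, hnd⟩, le_refl _⟩
    · obtain ⟨x, hdup⟩ := List.exists_duplicate_iff_not_nodup.mpr hnd
      rw [List.duplicate_iff_sublist] at hdup
      obtain ⟨A, B, C, rfl⟩ := sublist_pair_decomp hdup
      obtain ⟨hne, hh, hl, hc⟩ := hwalk
      -- chain facts
      rw [List.Chain', List.isChain_append] at hc
      obtain ⟨hcA, hcX, hlink⟩ := hc
      have hsplit : x :: (B ++ x :: C) = (x :: B) ++ (x :: C) := by simp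
      rw [hsplit, List.isChain_append] at hcX
      obtain ⟨hcxB, hcxC, hlink2⟩ := hcX
      -- the cycle walk
      have hcyc : IsWalk E x x ((x :: B) ++ [x]) := by
        refine ⟨by simp, by simp, ?_, ?_⟩
        · rw [List.getLast?_append_cons]; simp
        · rw [List.Chain', List.isChain_append]
          exact ⟨hcxB, List.isChain_singleton _, fun y hy z hz => by
            simp only [List.head?_cons, Option.mem_def, Option.some.injEq] at hz
            subst hz; exact hlink2 y hy x (by simp)⟩
      have hcycw : 0 ≤ walkWeight w ((x :: B) ++ [x]) := hnn x _ hcyc (by simp)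
      -- the shorter walk
      have hwalk' : IsWalk E s v (A ++ x :: C) := by
        refine ⟨by simp, ?_, ?_, ?_⟩
        · cases A with
          | nil => simpa using hh
          | cons a A' =>
            rw [List.head?_append_of_ne_nil _ (by simp)] at hh ⊢
            exact hh
        · rw [List.getLast?_append_cons] at hl ⊢
          cases C with
          | nil =>
            have h4 : ((x :: B) ++ [x]).getLast? = some v := by simpa using hl
            rw [List.getLast?_concat] at h4
            simpa using h4
          | cons c C' =>
            rw [show x :: (B ++ x :: c :: C') = (x :: B) ++ x :: c :: C' by simp,
              List.getLast?_append_cons] at hl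
            exact hl
        · rw [List.Chain', List.isChain_append]
          refine ⟨hcA, hcxC, fun y hy z hz => ?_⟩
          simp only [List.head?_cons, Option.mem_def, Option.some.injEq] at hz
          subst hz
          exact hlink y hy x (by simp)
      -- weights
      have hw1 : walkWeight w (A ++ x :: (B ++ x :: C)) =
          walkWeight w (A ++ [x]) + walkWeight w ((x :: B) ++ [x]) + walkWeight w (x :: C) := by
        rw [walkWeight_split w A x (B ++ x :: C)]
        have : x :: (B ++ x :: C) = (x :: B) ++ x :: C := by simp
        rw [this, walkWeight_split w (x :: B) x C]
        ring
      have hw2 : walkWeight w (A ++ x :: C) =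
          walkWeight w (A ++ [x]) + walkWeight w (x :: C) :=
        walkWeight_split w A x C
      have hlen : (A ++ x :: C).length ≤ m := by
        have := hm; simp at this ⊢; omega
      obtain ⟨M, hMpath, hMle⟩ := ih (A ++ x :: C) v hlen hwalk'
      exact ⟨M, hMpath, by rw [hw1]; rw [hw2] at hMle; linarith⟩


/-- Assume the directed graph contains no directed cycle of negative
weight and `n ≥ 2`. Then for every vertex `v` reachable from the source `s = v_1`,
`D_{2n-3}(v)` equals the minimum weight of a directed path from `s` to `v`, and
`D_{2n-3}(v) = +∞` for every vertex `v` not reachable from `s`. (Here `V = Fin n` is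
enumerated so that BFS levels are nondecreasing and unreachable vertices come after all
reachable ones; this is the case `t = n - 2`, matching the Bellman–Ford algorithm.) -/
theorem stmt2 (n : ℕ) (hn : 2 ≤ n) (E : Fin n → Fin n → Prop) [DecidableRel E]
    (w : Fin n → Fin n → ℝ) (s : Fin n) (hs : s.val = 0)
    (horder : ∀ i j : Fin n, i < j → Reaches E s i → Reaches E s j →
      level E s i ≤ level E s j)
    (hafter : ∀ i j : Fin n, i < j → Reaches E s j → Reaches E s i)
    (hnonneg : ∀ (u : Fin n) (L : List (Fin n)), IsWalk E u u L → 2 ≤ L.length →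
      0 ≤ walkWeight w L)
    (v : Fin n) :
    (Reaches E s v →
      ∃ L, IsPath E s v L ∧ Dseq n E w s (2 * n - 3) v = (walkWeight w L : WithTop ℝ) ∧
        ∀ M, IsPath E s v M → walkWeight w L ≤ walkWeight w M) ∧
    (¬ Reaches E s v → Dseq n E w s (2 * n - 3) v = ⊤) := by
  constructor
  · intro hreach
    -- self-loop weights are nonnegative
    have hw : ∀ u : Fin n, E u u → 0 ≤ w u u := by
      intro u he
      have h1 : IsWalk E u u [u, u] := ⟨by simp, by simp, by simp, by simp [List.Chain', he]⟩
      have := hnonneg u [u, u] h1 (by simp)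
      simpa [walkWeight_cons, walkWeight_singleton] using this
    -- path set is finite and nonempty
    have hfin : {M : List (Fin n) | IsPath E s v M}.Finite := by
      refine (List.finite_length_le (Fin n) n).subset ?_
      intro M hM
      have := hM.2.length_le_card
      simpa using this
    obtain ⟨L0, hL0⟩ := hreach
    obtain ⟨P0, hP0, -⟩ := walk_to_path E w s hnonneg L0.length L0 v le_rfl hL0
    obtain ⟨L, hL, hLmin⟩ := Set.exists_min_image _ (walkWeight w) hfin ⟨P0, hP0⟩
    refine ⟨L, hL, ?_, fun M hM => hLmin M hM⟩
    have hub : Dseq n E w s (2 * n - 3) v ≤ (walkWeight w L : WithTop ℝ) := by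
      obtain ⟨r, hr, hD⟩ := upper_bound E w s hs hw L.length L v le_rfl hL.1
      have hLn : L.length ≤ n := by simpa using hL.2.length_le_card
      exact le_trans (Dseq_anti E w s (by omega) v) hD
    have hne : Dseq n E w s (2 * n - 3) v ≠ ⊤ := by
      intro h; rw [h] at hub; exact WithTop.coe_ne_top (top_le_iff.mp hub)
    obtain ⟨M', hM'walk, hM'eq⟩ := Dseq_sound E w s (2 * n - 3) v hne
    obtain ⟨M, hMpath, hMle⟩ := walk_to_path E w s hnonneg M'.length M' v le_rfl hM'walk
    have hlb : (walkWeight w L : WithTop ℝ) ≤ Dseq n E w s (2 * n - 3) v := by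
      rw [hM'eq, WithTop.coe_le_coe]
      exact le_trans (hLmin M hMpath) hMle
    exact le_antisymm hub hlb
  · intro hreach
    by_contra hne
    obtain ⟨M, hMwalk, -⟩ := Dseq_sound E w s (2 * n - 3) v hne
    exact hreach ⟨M, hMwalk⟩
end

section
/- For every integer t ≥ 0 and every vertex v, every directed walk from s to v having at most ℓ(v) + t edges contains at most t edges (x, y) with ℓ(y) ≤ ℓ(x). -/
lemma zip_tail_append {V : Type} : ∀ (l : List V) (a b : V),
    ((l ++ [a, b]).zip (l ++ [a, b]).tail) = ((l ++ [a]).zip (l ++ [a]).tail) ++ [(a, b)] := by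
  intro l
  induction l with
  | nil => simp
  | cons x l ih =>
    intro a b
    cases l with
    | nil => simp
    | cons y l' =>
      have := ih a b
      simp_all

lemma level_self {V : Type} (E : V → V → Prop) (s : V) : level E s s = 0 := by
  have : 0 ∈ {k | ∃ L, IsWalk E s s L ∧ L.length = k + 1} := ⟨[s], ⟨by simp, by simp, by simp, List.isChain_singleton s⟩, by simp⟩
  exact Nat.sInf_eq_zero.2 (Or.inl this)

lemma level_spec {V : Type} {E : V → V → Prop} {s u : V} (h : Reaches E s u) :
    ∃ L, IsWalk E s u L ∧ L.length = level E s u + 1 := by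
  obtain ⟨L, hL⟩ := h
  have hne : {k | ∃ L, IsWalk E s u L ∧ L.length = k + 1}.Nonempty := by
    refine ⟨L.length - 1, L, hL, ?_⟩
    have := hL.1
    cases L with
    | nil => simp at this
    | cons a l => simp
  exact Nat.sInf_mem hne

lemma level_succ {V : Type} {E : V → V → Prop} {s u v : V} (hE : E u v) (h : Reaches E s u) :
    level E s v ≤ level E s u + 1 := by
  obtain ⟨L, hL, hlen⟩ := level_spec h
  refine Nat.sInf_le ⟨L ++ [v], ⟨by simp, ?_, by simp, ?_⟩, by simp [hlen]⟩
  · rw [List.head?_append_of_ne_nil _ hL.1]  -- guess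
    exact hL.2.1
  · unfold List.Chain'
    rw [List.isChain_append]
    refine ⟨hL.2.2.2, List.isChain_singleton v, ?_⟩
    intro x hx y hy
    simp at hy
    subst hy
    rw [hL.2.2.1] at hx
    simp at hx
    subst hx
    exact hE

lemma main_lemma {V : Type} {E : V → V → Prop} {s : V} :
    ∀ (L : List V) (v : V), IsWalk E s v L →
      level E s v + (L.zip L.tail).countP (fun e => decide (level E s e.2 ≤ level E s e.1))
        ≤ L.length - 1 := by
  intro L
  induction L using List.reverseRecOn with
  | nil => intro v h; exact absurd rfl h.1
  | append_singleton l a ih =>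
    intro v h
    have hva : v = a := by
      have := h.2.2.1
      simp at this
      exact this.symm
    subst hva
    cases hl : l.reverse with
    | nil =>
      have : l = [] := by simpa using congrArg List.reverse hl
      subst this
      have hsv : s = v := by have := h.2.1; simp at this; exact this.symm
      subst hsv
      simp [level_self]
    | cons u l' =>
      have hleq : l = l'.reverse ++ [u] := by
        have := congrArg List.reverse hl
        simpa using this
      have hlne : l ≠ [] := by subst hleq; simp
      have hlast : l.getLast? = some u := by subst hleq; simp
      have hchain : l.Chain' E ∧ E u v := by
        have hc := h.2.2.2
        unfold List.Chain' at hc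
        rw [List.isChain_append] at hc
        refine ⟨hc.1, ?_⟩
        have := hc.2.2 u (by simpa using hlast) v (by simp)
        exact this
      have hwalk : IsWalk E s u l := by
        refine ⟨hlne, ?_, hlast, hchain.1⟩
        have := h.2.1
        rwa [List.head?_append_of_ne_nil _ hlne] at this
      have hreach : Reaches E s u := ⟨l, hwalk⟩
      have ihl := ih u hwalk
      have hlen1 : 1 ≤ l.length := List.length_pos_iff.2 hlne
      have hzip : ((l ++ [v]).zip (l ++ [v]).tail)
          = (l.zip l.tail) ++ [(u, v)] := by
        rw [hleq]
        have := zip_tail_append (V := V) l'.reverse u v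
        simpa using this
      rw [hzip, List.countP_append]
      simp only [List.countP_singleton, List.length_append, List.length_singleton]
      by_cases hbad : level E s v ≤ level E s u
      · rw [if_pos (by simpa using hbad)]
        omega
      · have hgood : level E s v ≤ level E s u + 1 := level_succ hchain.2 hreach
        rw [if_neg (by simpa using hbad)]
        omega


/-- For every integer `t ≥ 0` and every vertex `v`, every directed walk
from `s` to `v` having at most `ℓ(v) + t` edges contains at most `t` edges `(x, y)` with
`ℓ(y) ≤ ℓ(x)`. (A walk given by a list `L` has `L.length - 1` edges.) -/
theorem stmt5 (V : Type) [Fintype V] (E : V → V → Prop) (s : V)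
    (t : ℕ) (v : V) (L : List V) (hL : IsWalk E s v L)
    (hlen : L.length ≤ level E s v + t + 1) :
    (L.zip L.tail).countP (fun e => decide (level E s e.2 ≤ level E s e.1)) ≤ t := by
  have h := main_lemma L v hL
  have h1 : 1 ≤ L.length := List.length_pos_iff.2 hL.1
  omega
end
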